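/- For each fixed r₀ > 0, every point (x, y, z) on the curve θ ↦ 𝔅_m(r₀, θ) of the Bour surface of value m lies on the quadric of revolution x² + y² + (m²/(m²-1)) z² = (r₀^{m-1}/(m-1) + r₀^{m+1}/(m+1))². -/

import Mathlib

open Real

theorem bour_curve_on_quadric (m : ℝ) (hm : m ≠ -1 ∧ m ≠ 0 ∧ m ≠ 1)
    (r₀ : ℝ) (hr : 0 < r₀) (θ : ℝ) :
    (r₀ ^ (m - 1) * Real.cos ((m - 1) * θ) / (m - 1)
      - r₀ ^ (m + 1) * Real.cos ((m + 1) * θ) / (m + 1)) ^ 2 +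
    (-(r₀ ^ (m - 1)) * Real.sin ((m - 1) * θ) / (m - 1)
      - r₀ ^ (m + 1) * Real.sin ((m + 1) * θ) / (m + 1)) ^ 2 +
    (m ^ 2 / (m ^ 2 - 1)) * (2 * r₀ ^ m * Real.cos (m * θ) / m) ^ 2
      = (r₀ ^ (m - 1) / (m - 1) + r₀ ^ (m + 1) / (m + 1)) ^ 2 := by
  obtain ⟨h1, h0, h2⟩ := hm
  have hm1 : m - 1 ≠ 0 := sub_ne_zero.2 h2
  have hp1 : m + 1 ≠ 0 := by intro h; apply h1; linarith
  have hsq : m ^ 2 - 1 ≠ 0 := by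
    intro h
    have : (m - 1) * (m + 1) = 0 := by ring_nf; nlinarith [h]
    rcases mul_eq_zero.1 this with h | h
    · exact hm1 h
    · exact hp1 h
  have hab : r₀ ^ (m - 1) * r₀ ^ (m + 1) = (r₀ ^ m) ^ 2 := by
    rw [← Real.rpow_add hr, ← Real.rpow_natCast (r₀ ^ m) 2, ← Real.rpow_mul hr.le]
    norm_num
    congr 1
    ring
  have e1 : (m - 1) * θ = m * θ - θ := by ring
  have e2 : (m + 1) * θ = m * θ + θ := by ring
  rw [e1, e2, Real.cos_sub, Real.cos_add, Real.sin_sub, Real.sin_add]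
  have h3 := Real.sin_sq_add_cos_sq (m * θ)
  have h4 := Real.sin_sq_add_cos_sq θ
  field_simp
  linear_combination
    ((m^2-1) *
      ((r₀^(m-1)*(m+1) - r₀^(m+1)*(m-1))^2 * Real.cos (m*θ)^2
        + (r₀^(m-1)*(m+1) + r₀^(m+1)*(m-1))^2 * Real.sin (m*θ)^2)) * h4
    + ((m^2-1) * (r₀^(m-1)*(m+1) + r₀^(m+1)*(m-1))^2) * h3
    - (4 * Real.cos (m*θ)^2 * ((m-1)*(m+1))^2) * hab
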